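/- For 2 ≤ k ≤ n, the Manhattan radius of the Hales-ordered adjacency matrix between weight-k and weight-(k-1) levels satisfies r(M^(n)_{k,k-1}) = C(n-1,k) + C(n-1,k-2) + C(n-1,k-1). -/

import Mathlib

open Finset

/-- Hamming weight of a vertex of the hypercube `{0,1}^n`. -/
def wt {n : ℕ} (u : Fin n → Bool) : ℕ := (Finset.univ.filter fun i => u i = true).card

/-- `u` is strictly greater than `v` in lexicographic order relative to the
right-to-left order of the coordinates. -/
def rtlLexGT {n : ℕ} (u v : Fin n → Bool) : Prop :=
  ∃ i, v i < u i ∧ ∀ j, i < j → u j = v j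

/-- The Hales order on `{0,1}^n`. -/
def halesLE {n : ℕ} (u v : Fin n → Bool) : Prop :=
  wt u < wt v ∨ (wt u = wt v ∧ (u = v ∨ rtlLexGT u v))

/-- The recursively defined matrices `A_k^{(n)}`, encoded as lists of rows. -/
def A : (n : ℕ) → (k : ℕ) → List (Fin n → Bool)
  | _, 0 => [fun _ => false]
  | 0, _ + 1 => []
  | n + 1, k + 1 =>
    if k + 1 = n + 1 then [fun _ => true]
    else (A n k).map (fun u => Fin.snoc u true) ++ (A n (k + 1)).map (fun u => Fin.snoc u false)

/-- The stacking `S^{(n)} = [A_0^{(n)}; …; A_n^{(n)}]`. -/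
def Sl (n : ℕ) : List (Fin n → Bool) := (List.range (n + 1)).flatMap (A n)

/-- Entry `(i, j)` (0-based) of the adjacency matrix `M^{(n)}_{k,k'}` between the
weight-`k` and weight-`k'` levels of the hypercube, both in Hales order. -/
def Mval (n k k' : ℕ) (i j : ℕ) : ℕ :=
  if hammingDist ((A n k).getD i (fun _ => false)) ((A n k').getD j (fun _ => false)) = 1
  then 1 else 0

/-- Manhattan radius `r(M^{(n)}_{k,k'})`. -/
def mr (n k k' : ℕ) : ℕ :=
  ((Finset.range (A n k).length) ×ˢ (Finset.range (A n k').length)).sup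
    (fun p => if Mval n k k' p.1 p.2 ≠ 0 then (A n k).length - p.1 + p.2 else 0)

/-- Bandwidth of a numbering of the hypercube. -/
def numBW (n : ℕ) (η : (Fin n → Bool) ≃ Fin (2 ^ n)) : ℕ :=
  Finset.univ.sup fun p : (Fin n → Bool) × (Fin n → Bool) =>
    if hammingDist p.1 p.2 = 1 then Nat.dist (η p.1) (η p.2) else 0

/-- Bandwidth of the hypercube `Q^{(n)}`. -/
noncomputable def cubeBW (n : ℕ) : ℕ := sInf (Set.range (numBW n))

/-- Minimum edge-distance of a numbering of the hypercube. -/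
noncomputable def abwOf (n : ℕ) (η : (Fin n → Bool) ≃ Fin (2 ^ n)) : ℕ :=
  sInf {d | ∃ u v : Fin n → Bool, hammingDist u v = 1 ∧ d = Nat.dist (η u) (η v)}

/-- Antibandwidth of the hypercube `Q^{(n)}`. -/
noncomputable def cubeABW (n : ℕ) : ℕ := sSup (Set.range (abwOf n))

/-- Bandwidth of the full Hales-ordered adjacency matrix `M^{(n)}`. -/
def bwM (n : ℕ) : ℕ :=
  ((Finset.range (Sl n).length) ×ˢ (Finset.range (Sl n).length)).sup
    (fun p =>
      if hammingDist ((Sl n).getD p.1 (fun _ => false)) ((Sl n).getD p.2 (fun _ => false)) = 1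
      then Nat.dist p.1 p.2 else 0)

/-- Manhattan radius of a general `s × t` matrix. -/
def manRadius {s t : ℕ} (M : Matrix (Fin s) (Fin t) ℕ) : ℕ :=
  Finset.univ.sup fun p : Fin s × Fin t => if M p.1 p.2 ≠ 0 then s - (p.1 : ℕ) + p.2 else 0

lemma wt_snoc {n : ℕ} (u : Fin n → Bool) (b : Bool) :
    wt (Fin.snoc u b) = wt u + if b then 1 else 0 := by
  unfold wt
  rw [Finset.card_filter, Finset.card_filter, Fin.sum_univ_castSucc]
  simp [Fin.snoc_castSucc, Fin.snoc_last]

lemma hammingDist_snoc {n : ℕ} (u v : Fin n → Bool) (a b : Bool) :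
    hammingDist (Fin.snoc u a : Fin (n+1) → Bool) (Fin.snoc v b) = hammingDist u v + if a = b then 0 else 1 := by
  simp only [hammingDist]
  rw [Finset.card_filter, Finset.card_filter, Fin.sum_univ_castSucc]
  simp [Fin.snoc_castSucc, Fin.snoc_last]

lemma A_succ_succ (n k : ℕ) (h : k + 1 ≠ n + 1) :
    A (n+1) (k+1) = (A n k).map (fun u => Fin.snoc u true)
      ++ (A n (k+1)).map (fun u => Fin.snoc u false) := by
  rw [A, if_neg h]

lemma A_self : ∀ n, A n n = [fun _ => true] := by
  intro n
  cases n with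
  | zero => simp [A]; funext i; exact i.elim0
  | succ m => rw [A, if_pos rfl]

lemma length_A : ∀ n k, (A n k).length = n.choose k := by
  intro n
  induction n with
  | zero => intro k; cases k <;> simp [A]
  | succ m IH =>
    intro k
    cases k with
    | zero => simp [A]
    | succ l =>
      by_cases h : l + 1 = m + 1
      · rw [h, A_self]; simp [Nat.choose_self]
      · rw [A_succ_succ _ _ h]
        simp [IH, Nat.choose_succ_succ]

lemma wt_false (n : ℕ) : wt (fun _ : Fin n => false) = 0 := by simp [wt]

lemma wt_true (n : ℕ) : wt (fun _ : Fin n => true) = n := by simp [wt]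

lemma wt_of_mem_A : ∀ n k u, u ∈ A n k → wt u = k := by
  intro n
  induction n with
  | zero =>
    intro k u hu
    cases k with
    | zero => simp [A] at hu; subst hu; exact wt_false 0
    | succ l => simp [A] at hu
  | succ m IH =>
    intro k u hu
    cases k with
    | zero => simp [A] at hu; subst hu; exact wt_false _
    | succ l =>
      by_cases h : l + 1 = m + 1
      · rw [h, A_self] at hu
        simp at hu; subst hu
        rw [wt_true, h]
      · rw [A_succ_succ _ _ h] at hu
        simp only [List.mem_append, List.mem_map] at hu
        rcases hu with ⟨w, hw, rfl⟩ | ⟨w, hw, rfl⟩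
        · rw [wt_snoc, IH _ _ hw]; simp
        · rw [wt_snoc, IH _ _ hw]; simp

lemma snoc_injective {n : ℕ} (b : Bool) :
    Function.Injective (fun u : Fin n → Bool => (Fin.snoc u b : Fin (n+1) → Bool)) := by
  intro u v h
  have := congrArg Fin.init h
  simpa [Fin.init_snoc] using this

lemma nodup_A : ∀ n k, (A n k).Nodup := by
  intro n
  induction n with
  | zero => intro k; cases k <;> simp [A]
  | succ m IH =>
    intro k
    cases k with
    | zero => simp [A]
    | succ l =>
      by_cases h : l + 1 = m + 1
      · rw [h, A_self]; simp
      · rw [A_succ_succ _ _ h]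
        refine List.Nodup.append ((IH l).map (snoc_injective true))
          ((IH (l+1)).map (snoc_injective false)) ?_
        intro x hx hy
        simp only [List.mem_map] at hx hy
        obtain ⟨w, _, rfl⟩ := hx
        obtain ⟨w', _, h2⟩ := hy
        have := congrArg (fun f => f (Fin.last m)) h2
        simp [Fin.snoc_last] at this

def T (n k : ℕ) : ℕ := (n-1).choose k + (n-1).choose (k-2) + (n-1).choose (k-1)

lemma choose_aux (p l : ℕ) : p.choose (l-1) ≤ (p+1).choose l := by
  cases l with
  | zero => simp
  | succ q => rw [Nat.choose_succ_succ']; simp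

lemma ineq_a (m l : ℕ) (hk : l + 2 ≤ m + 1) :
    m.choose (l+2) + T m (l+1) ≤ T (m+1) (l+2) := by
  obtain ⟨p, rfl⟩ : ∃ p, m = p + 1 := ⟨m - 1, by omega⟩
  simp only [T]
  simp only [Nat.add_sub_cancel, Nat.succ_sub_one, show l+1-2 = l-1 from rfl,
    show l+2-2 = l from rfl, show l+2-1 = l+1 from rfl, show l+1-1 = l from rfl]
  have h1 : (p+1).choose (l+1) = p.choose l + p.choose (l+1) := Nat.choose_succ_succ' p l
  have h2 : p.choose (l-1) ≤ (p+1).choose l := choose_aux p l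
  omega

lemma ineq_b (m l : ℕ) (hk : l + 2 ≤ m) :
    T m (l+2) + m.choose l ≤ T (m+1) (l+2) := by
  obtain ⟨p, rfl⟩ : ∃ p, m = p + 1 := ⟨m - 1, by omega⟩
  simp only [T]
  simp only [Nat.add_sub_cancel, Nat.succ_sub_one, show l+2-2 = l from rfl,
    show l+2-1 = l+1 from rfl]
  have h1 : (p+1).choose (l+1) = p.choose l + p.choose (l+1) := Nat.choose_succ_succ' p l
  have h2 : (p+1).choose (l+2) = p.choose (l+1) + p.choose (l+2) := Nat.choose_succ_succ' p (l+1)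
  have h3 : p.choose l ≤ (p+1).choose l := Nat.choose_le_choose l (by omega)
  omega

lemma getD_map' {α β : Type*} (l : List α) (f : α → β) (i : ℕ) (h : i < l.length)
    (d : β) (d' : α) : (l.map f).getD i d = f (l.getD i d') := by
  rw [List.getD_eq_getElem _ _ (by simpa using h), List.getElem_map,
    List.getD_eq_getElem _ _ h]

lemma mem_getD {α : Type*} (l : List α) (i : ℕ) (h : i < l.length) (d : α) :
    l.getD i d ∈ l := by
  rw [List.getD_eq_getElem _ _ h]
  exact List.getElem_mem h

lemma key : ∀ n k, 1 ≤ k → k ≤ n →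
    ∀ i j, i < (A n k).length → j < (A n (k-1)).length →
    hammingDist ((A n k).getD i (fun _ => false)) ((A n (k-1)).getD j (fun _ => false)) = 1 →
    (A n k).length - i + j ≤ T n k := by
  intro n
  induction n with
  | zero => intro k h1 h2 _ _ _ _ _; omega
  | succ m IH =>
    intro k hk1 hk2 i j hi hj hd
    rcases Nat.lt_or_ge k 2 with hk | hk
    · have hk' : k = 1 := by omega
      subst hk'
      have hj0 : j = 0 := by simp [A] at hj; omega
      have hlen : (A (m+1) 1).length = m+1 := by rw [length_A, Nat.choose_one_right]
      have hT : T (m+1) 1 = m + 2 := by simp [T]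
      omega
    obtain ⟨l, rfl⟩ : ∃ l, k = l + 2 := ⟨k - 2, by omega⟩
    rw [show l + 2 - 1 = l + 1 from rfl] at hj hd
    rcases Nat.lt_or_ge (l+2) (m+1) with hkm | hkm
    · -- recursive case : l + 2 ≤ m
      have hlm : l + 2 ≤ m := by omega
      have hA1 : A (m+1) (l+2) = (A m (l+1)).map (fun u => Fin.snoc u true)
          ++ (A m (l+2)).map (fun u => Fin.snoc u false) := A_succ_succ m (l+1) (by omega)
      have hA2 : A (m+1) (l+1) = (A m l).map (fun u => Fin.snoc u true)
          ++ (A m (l+1)).map (fun u => Fin.snoc u false) := A_succ_succ m l (by omega)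
      have ha : (A m (l+1)).length = m.choose (l+1) := length_A m (l+1)
      have hb : (A m l).length = m.choose l := length_A m l
      have hc : (A m (l+2)).length = m.choose (l+2) := length_A m (l+2)
      have hlen1 : (A (m+1) (l+2)).length = (A m (l+1)).length + (A m (l+2)).length := by
        rw [hA1]; simp
      have hlen2 : (A (m+1) (l+1)).length = (A m l).length + (A m (l+1)).length := by
        rw [hA2]; simp
      rw [hlen1] at hi ⊢
      have hj' : j < (A m l).length + (A m (l+1)).length := by rw [← hlen2]; exact hj
      rcases Nat.lt_or_ge i (A m (l+1)).length with hia | hia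
      · have hrow : (A (m+1) (l+2)).getD i (fun _ => false)
            = Fin.snoc ((A m (l+1)).getD i (fun _ => false)) true := by
          rw [hA1, List.getD_append _ _ _ _ (by simpa using hia),
            getD_map' _ _ _ hia]
        rcases Nat.lt_or_ge j (A m l).length with hjb | hjb
        · -- top-left block
          have hcol : (A (m+1) (l+1)).getD j (fun _ => false)
              = Fin.snoc ((A m l).getD j (fun _ => false)) true := by
            rw [hA2, List.getD_append _ _ _ _ (by simpa using hjb),
              getD_map' _ _ _ hjb]
          rw [hrow, hcol, hammingDist_snoc] at hd
          simp only [if_pos rfl, Nat.add_zero] at hd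
          have hIH := IH (l+1) (by omega) (by omega) i j hia hjb hd
          have h2 := ineq_a m l (by omega)
          omega
        · -- identity block
          have hjb' : j - (A m l).length < (A m (l+1)).length := by omega
          have hcol : (A (m+1) (l+1)).getD j (fun _ => false)
              = Fin.snoc ((A m (l+1)).getD (j - (A m l).length) (fun _ => false)) false := by
            rw [hA2, List.getD_append_right _ _ _ _ (by simpa using hjb)]
            simp only [List.length_map]
            exact getD_map' _ _ _ hjb' _ _
          rw [hrow, hcol, hammingDist_snoc] at hd
          rw [if_neg (by decide : ¬ (true = false))] at hd
          have hd0 : hammingDist ((A m (l+1)).getD i (fun _ => false))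
              ((A m (l+1)).getD (j - (A m l).length) (fun _ => false)) = 0 := by omega
          have heq := eq_of_hammingDist_eq_zero hd0
          rw [List.getD_eq_getElem _ _ hia, List.getD_eq_getElem _ _ hjb'] at heq
          have hij : i = j - (A m l).length := ((nodup_A m (l+1)).getElem_inj_iff).mp heq
          have hT : T (m+1) (l+2) = m.choose (l+2) + m.choose l + m.choose (l+1) := by
            simp [T]
          omega
      · have hia' : i - (A m (l+1)).length < (A m (l+2)).length := by omega
        have hrow : (A (m+1) (l+2)).getD i (fun _ => false)
            = Fin.snoc ((A m (l+2)).getD (i - (A m (l+1)).length) (fun _ => false)) false := by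
          rw [hA1, List.getD_append_right _ _ _ _ (by simpa using hia)]
          simp only [List.length_map]
          exact getD_map' _ _ _ hia' _ _
        rcases Nat.lt_or_ge j (A m l).length with hjb | hjb
        · -- zero block : impossible
          exfalso
          have hcol : (A (m+1) (l+1)).getD j (fun _ => false)
              = Fin.snoc ((A m l).getD j (fun _ => false)) true := by
            rw [hA2, List.getD_append _ _ _ _ (by simpa using hjb),
              getD_map' _ _ _ hjb]
          rw [hrow, hcol, hammingDist_snoc] at hd
          rw [if_neg (by decide : ¬ (false = true))] at hd
          have hd0 : hammingDist ((A m (l+2)).getD (i - (A m (l+1)).length) (fun _ => false))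
              ((A m l).getD j (fun _ => false)) = 0 := by omega
          have heq := eq_of_hammingDist_eq_zero hd0
          have hw1 := wt_of_mem_A m (l+2) _ (mem_getD _ _ hia' (fun _ => false))
          have hw2 := wt_of_mem_A m l _ (mem_getD _ _ hjb (fun _ => false))
          rw [heq, hw2] at hw1
          omega
        · -- bottom-right block
          have hjb' : j - (A m l).length < (A m (l+1)).length := by omega
          have hcol : (A (m+1) (l+1)).getD j (fun _ => false)
              = Fin.snoc ((A m (l+1)).getD (j - (A m l).length) (fun _ => false)) false := by
            rw [hA2, List.getD_append_right _ _ _ _ (by simpa using hjb)]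
            simp only [List.length_map]
            exact getD_map' _ _ _ hjb' _ _
          rw [hrow, hcol, hammingDist_snoc] at hd
          simp only [if_pos rfl, Nat.add_zero] at hd
          have hIH := IH (l+2) (by omega) hlm (i - (A m (l+1)).length)
            (j - (A m l).length) hia' hjb' hd
          have h2 := ineq_b m l hlm
          omega
    · -- k = m + 1
      obtain rfl : m = l + 1 := by omega
      rw [show l + 1 + 1 = l + 2 from rfl] at hi hj hd ⊢
      have hone : A (l+2) (l+2) = [fun _ => true] := A_self (l+2)
      have hi0 : i = 0 := by rw [hone] at hi; simpa using hi
      have hlen : (A (l+2) (l+2)).length = 1 := by rw [hone]; rfl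
      have hjlen : j < l + 2 := by
        have := hj
        rw [length_A] at this
        simp [Nat.choose_succ_self_right] at this; omega
      have hT : T (l+2) (l+2) = (l+1).choose (l+2) + (l+1).choose l + (l+1).choose (l+1) := by
        simp [T]
      rw [Nat.choose_succ_self_right, Nat.choose_self] at hT
      omega

lemma snoc_true_const (n : ℕ) :
    (Fin.snoc (fun _ : Fin n => true) true : Fin (n+1) → Bool) = fun _ => true := by
  funext x
  refine Fin.lastCases ?_ ?_ x
  · simp [Fin.snoc_last]
  · intro i; simp [Fin.snoc_castSucc]

lemma getD_zero_A (m l : ℕ) (h : l ≤ m) :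
    (A (m+1) (l+1)).getD 0 (fun _ => false)
      = Fin.snoc ((A m l).getD 0 (fun _ => false)) true := by
  have h0 : 0 < (A m l).length := by rw [length_A]; exact Nat.choose_pos h
  by_cases hc : l + 1 = m + 1
  · obtain rfl : l = m := by omega
    rw [A_self, A_self]
    simp only [List.getD_cons_zero]
    exact (snoc_true_const _).symm
  · rw [A_succ_succ _ _ hc, List.getD_append _ _ _ _ (by simpa using h0),
      getD_map' _ _ _ h0]

/-- For `2 ≤ k ≤ n`,
`r(M^{(n)}_{k,k-1}) = C(n-1,k) + C(n-1,k-2) + C(n-1,k-1)`. -/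
theorem manhattan_radius_down (n k : ℕ) (hk1 : 2 ≤ k) (hk2 : k ≤ n) :
    mr n k (k - 1) = (n - 1).choose k + (n - 1).choose (k - 2) + (n - 1).choose (k - 1) := by
  have hT : (n-1).choose k + (n-1).choose (k-2) + (n-1).choose (k-1) = T n k := rfl
  rw [hT]
  apply le_antisymm
  · apply Finset.sup_le
    rintro ⟨i, j⟩ hp
    simp only [Finset.mem_product, Finset.mem_range] at hp
    split
    · next h =>
      have hd : hammingDist ((A n k).getD i (fun _ => false))
          ((A n (k-1)).getD j (fun _ => false)) = 1 := by
        by_contra hc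
        exact h (by rw [Mval, if_neg hc])
      exact key n k (by omega) hk2 i j hp.1 hp.2 hd
    · exact Nat.zero_le _
  · obtain ⟨l, rfl⟩ : ∃ l, k = l + 2 := ⟨k - 2, by omega⟩
    obtain ⟨m, rfl⟩ : ∃ m, n = m + 1 := ⟨n - 1, by omega⟩
    have hlm : l + 1 ≤ m := by omega
    have hrow := getD_zero_A m (l+1) hlm
    have ha0 : 0 < (A m (l+1)).length := by rw [length_A]; exact Nat.choose_pos hlm
    have hcol : (A (m+1) (l+1)).getD ((A m l).length) (fun _ => false)
        = Fin.snoc ((A m (l+1)).getD 0 (fun _ => false)) false := by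
      rw [A_succ_succ m l (by omega), List.getD_append_right _ _ _ _ (by simp)]
      simp only [List.length_map, Nat.sub_self]
      exact getD_map' _ _ _ ha0 _ _
    have hd : hammingDist ((A (m+1) (l+2)).getD 0 (fun _ => false))
        ((A (m+1) (l+2-1)).getD ((A m l).length) (fun _ => false)) = 1 := by
      rw [show l + 2 - 1 = l + 1 from rfl, hrow, hcol, hammingDist_snoc]
      simp
    have hmem : ((0 : ℕ), (A m l).length) ∈
        (Finset.range (A (m+1) (l+2)).length) ×ˢ (Finset.range (A (m+1) (l+2-1)).length) := by
      simp only [Finset.mem_product, Finset.mem_range]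
      constructor
      · rw [length_A]; exact Nat.choose_pos (by omega)
      · rw [show l + 2 - 1 = l + 1 from rfl, length_A, length_A,
          Nat.choose_succ_succ' m l]
        have := Nat.choose_pos hlm
        omega
    have hle := Finset.le_sup (f := fun p : ℕ × ℕ =>
      if Mval (m+1) (l+2) (l+2-1) p.1 p.2 ≠ 0 then (A (m+1) (l+2)).length - p.1 + p.2 else 0) hmem
    rw [mr]
    have hM : Mval (m+1) (l+2) (l+2-1) 0 ((A m l).length) = 1 := by
      rw [Mval, if_pos hd]
    calc T (m+1) (l+2) ≤ (if Mval (m+1) (l+2) (l+2-1) 0 ((A m l).length) ≠ 0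
          then (A (m+1) (l+2)).length - 0 + (A m l).length else 0) := by
          rw [hM, if_pos (by norm_num)]
          have h1 : (A (m+1) (l+2)).length = m.choose (l+1) + m.choose (l+2) := by
            rw [length_A]; exact Nat.choose_succ_succ' m (l+1)
          have h2 : (A m l).length = m.choose l := length_A m l
          have h3 : T (m+1) (l+2) = m.choose (l+2) + m.choose l + m.choose (l+1) := by
            simp [T]
          omega
      _ ≤ _ := hle
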